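/- (Stratified IPS identity) Let Ω be a finite probability space partitioned into events L_1, ..., L_K of positive probability. Suppose O : Ω → {0,1} and δ : Ω → ℝ are such that, conditional on each L_k, O and δ are independent, and let q̂ : Ω → (0,1] be constant on each L_k with value E[O | L_k] > 0. Then E[O·δ/q̂] = Σ_k P(L_k)·E[δ | L_k]. -/

import Mathlib

open Finset

/-- Stratified IPS identity (Theorem 3 of the paper): on a finite probability space
partitioned into strata `L k` with positive probability, if `O` and `δ` are independent
conditional on each stratum and `q̂` is constant on each stratum with value `E[O | L k] > 0`,
then `E[O·δ/q̂] = Σ_k P(L k) · E[δ | L k]`. -/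
theorem stmt11 {Ω : Type*} [Fintype Ω] {K : ℕ}
    (p : Ω → ℝ) (hp : ∀ ω, 0 ≤ p ω) (hsum : ∑ ω, p ω = 1)
    (L : Fin K → Finset Ω)
    (hdisj : ∀ i j, i ≠ j → Disjoint (L i) (L j))
    (hcover : ∀ ω : Ω, ∃ k, ω ∈ L k)
    (hLpos : ∀ k, 0 < ∑ ω ∈ L k, p ω)
    (O δ qhat : Ω → ℝ)
    (hO : ∀ ω, O ω = 0 ∨ O ω = 1)
    (hqhat01 : ∀ ω, qhat ω ∈ Set.Ioc (0 : ℝ) 1)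
    -- conditional independence of `O` and `δ` given each stratum
    (hindep : ∀ k, ∀ a b : ℝ,
      ((∑ ω ∈ (L k).filter (fun ω => O ω = a ∧ δ ω = b), p ω) / ∑ ω ∈ L k, p ω)
        = ((∑ ω ∈ (L k).filter (fun ω => O ω = a), p ω) / ∑ ω ∈ L k, p ω) *
          ((∑ ω ∈ (L k).filter (fun ω => δ ω = b), p ω) / ∑ ω ∈ L k, p ω))
    -- `q̂` is constant on each stratum, equal to `E[O | L k] > 0`
    (hqhatval : ∀ k, ∀ ω ∈ L k,
      qhat ω = (∑ ω' ∈ L k, p ω' * O ω') / ∑ ω' ∈ L k, p ω')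
    (hEOpos : ∀ k, 0 < (∑ ω' ∈ L k, p ω' * O ω') / ∑ ω' ∈ L k, p ω') :
    (∑ ω, p ω * (O ω * δ ω / qhat ω))
      = ∑ k, (∑ ω ∈ L k, p ω) * ((∑ ω ∈ L k, p ω * δ ω) / ∑ ω ∈ L k, p ω) := by
  classical
  have hpart : ∀ f : Ω → ℝ, ∑ ω, f ω = ∑ k, ∑ ω ∈ L k, f ω := by
    intro f
    have huniv : (Finset.univ : Finset Ω) = Finset.univ.biUnion L := by
      ext ω
      simpa using hcover ω
    rw [huniv, Finset.sum_biUnion]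
    intro i _ j _ hij
    exact hdisj i j hij
  rw [hpart]
  refine Finset.sum_congr rfl fun k _ => ?_
  set S := L k with hS
  set P := ∑ ω ∈ S, p ω with hP
  have hPpos : 0 < P := hLpos k
  have hPne : P ≠ 0 := hPpos.ne'
  set q := (∑ ω' ∈ S, p ω' * O ω') / P with hq
  have hqpos : 0 < q := hEOpos k
  have hqne : q ≠ 0 := hqpos.ne'
  have h1 : ∑ ω ∈ S, p ω * (O ω * δ ω / qhat ω)
      = (∑ ω ∈ S, p ω * (O ω * δ ω)) / q := by
    rw [Finset.sum_div]
    refine Finset.sum_congr rfl fun ω hω => ?_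
    rw [hqhatval k ω hω]
    ring
  -- expectation of O on filter
  have hOsum : ∀ A : Finset Ω,
      ∑ ω ∈ A.filter (fun ω => O ω = 1), p ω = ∑ ω ∈ A, p ω * O ω := by
    intro A
    rw [Finset.sum_filter]
    refine Finset.sum_congr rfl fun ω _ => ?_
    rcases hO ω with h | h <;> simp [h]
  have hfiber : ∀ b : ℝ,
      ∑ ω ∈ S.filter (fun ω => O ω = 1 ∧ δ ω = b), p ω
        = q * ∑ ω ∈ S.filter (fun ω => δ ω = b), p ω := by
    intro b
    have h := hindep k 1 b
    rw [← hS, ← hP] at h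
    rw [div_eq_iff hPne] at h
    rw [h, hOsum S, hq]
    field_simp
  have expand : ∀ g : Ω → ℝ,
      ∑ ω ∈ S, g ω = ∑ b ∈ S.image δ, ∑ ω ∈ S.filter (fun ω => δ ω = b), g ω :=
    fun g => (Finset.sum_fiberwise_of_maps_to (fun ω h => Finset.mem_image_of_mem δ h) g).symm
  have key : ∑ ω ∈ S, p ω * (O ω * δ ω) = q * ∑ ω ∈ S, p ω * δ ω := by
    rw [expand (fun ω => p ω * (O ω * δ ω)), expand (fun ω => p ω * δ ω),
      Finset.mul_sum]
    refine Finset.sum_congr rfl fun b _ => ?_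
    have inner1 : ∑ ω ∈ S.filter (fun ω => δ ω = b), p ω * (O ω * δ ω)
        = b * ∑ ω ∈ S.filter (fun ω => O ω = 1 ∧ δ ω = b), p ω := by
      have : (S.filter (fun ω => δ ω = b)).filter (fun ω => O ω = 1)
          = S.filter (fun ω => O ω = 1 ∧ δ ω = b) := by
        rw [Finset.filter_filter]
        exact Finset.filter_congr fun ω _ => by tauto
      rw [← this, hOsum, Finset.sum_filter, Finset.sum_filter]
      rw [Finset.mul_sum]
      refine Finset.sum_congr rfl fun ω _ => ?_
      by_cases hδ : δ ω = b <;> simp [hδ] <;> ring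
    have inner2 : ∑ ω ∈ S.filter (fun ω => δ ω = b), p ω * δ ω
        = b * ∑ ω ∈ S.filter (fun ω => δ ω = b), p ω := by
      rw [Finset.sum_filter, Finset.sum_filter, Finset.mul_sum]
      refine Finset.sum_congr rfl fun ω _ => ?_
      by_cases hδ : δ ω = b <;> simp [hδ] <;> ring
    rw [inner1, inner2, hfiber b]
    ring
  rw [h1, key]
  field_simp
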